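/- Let Z ∈ ℝ^{k×k} be symmetric positive definite. Then: (i) for every b ≠ 0, ‖(1/b)·Z − I‖_F² = tr(Z²)/b² − 2·tr(Z)/b + k; and (ii) there exists b > 0 such that ‖(1/b)·Z − I‖_F < 1 if and only if (tr(Z))² > (k−1)·tr(Z²). -/

import Mathlib

open Matrix

/-- Frobenius norm of a real matrix. -/
noncomputable def frobNorm {m n : ℕ} (A : Matrix (Fin m) (Fin n) ℝ) : ℝ :=
  Real.sqrt (∑ i, ∑ j, (A i j) ^ 2)

lemma frobNorm_sq {m n : ℕ} (A : Matrix (Fin m) (Fin n) ℝ) :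
    frobNorm A ^ 2 = ∑ i, ∑ j, (A i j) ^ 2 := by
  apply Real.sq_sqrt
  positivity

/-- for `Z` symmetric positive definite:
(i) `‖Z/b − I‖_F² = tr(Z²)/b² − 2tr(Z)/b + k` for every `b ≠ 0`, and
(ii) there exists `b > 0` with `‖Z/b − I‖_F < 1` iff `tr(Z)² > (k−1)·tr(Z²)`. -/
theorem logdet_linearization_scale (k : ℕ) (hk : 0 < k)
    (Z : Matrix (Fin k) (Fin k) ℝ) (hZ : Z.PosDef) :
    (∀ b : ℝ, b ≠ 0 →
      frobNorm ((1 / b) • Z - 1) ^ 2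
        = (Z * Z).trace / b ^ 2 - 2 * Z.trace / b + k) ∧
    ((∃ b : ℝ, 0 < b ∧ frobNorm ((1 / b) • Z - 1) < 1) ↔
      Z.trace ^ 2 > ((k : ℝ) - 1) * (Z * Z).trace) := by
  have hsym : ∀ i j, Z j i = Z i j := by
    intro i j
    have := hZ.1
    rw [Matrix.IsHermitian] at this
    calc Z j i = Zᴴ i j := by simp [Matrix.conjTranspose_apply]
    _ = Z i j := by rw [this]
  have htr2 : (Z * Z).trace = ∑ i, ∑ j, (Z i j) ^ 2 := by
    rw [Matrix.trace]
    congr 1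
    ext i
    simp only [Matrix.diag_apply, Matrix.mul_apply]
    congr 1
    ext j
    rw [hsym i j]; ring
  have hdiag : ∀ i, 0 < Z i i := by
    intro i
    have h := hZ.dotProduct_mulVec_pos (x := Pi.single i 1) (by
      intro h
      have := congrFun h i
      simp at this)
    simpa [dotProduct, Matrix.mulVec, Pi.single_apply] using h
  have htrZ : 0 < Z.trace := by
    rw [Matrix.trace]
    exact Finset.sum_pos (fun i _ => hdiag i)
      (by simp [Finset.univ_nonempty_iff, Fin.pos_iff_nonempty.mp hk])
  have htrZZ : 0 < (Z * Z).trace := by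
    rw [htr2]
    have i0 : Fin k := ⟨0, hk⟩
    apply Finset.sum_pos' (fun i _ => Finset.sum_nonneg fun j _ => sq_nonneg _)
    refine ⟨i0, Finset.mem_univ _, ?_⟩
    apply Finset.sum_pos' (fun j _ => sq_nonneg _)
    exact ⟨i0, Finset.mem_univ _, pow_pos (hdiag i0) 2⟩
  have part1 : ∀ b : ℝ, b ≠ 0 →
      frobNorm ((1 / b) • Z - 1) ^ 2
        = (Z * Z).trace / b ^ 2 - 2 * Z.trace / b + k := by
    intro b hb
    rw [frobNorm_sq, htr2]
    have expand : ∀ i j : Fin k,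
        (((1 / b) • Z - 1) i j) ^ 2
          = (Z i j) ^ 2 / b ^ 2 - 2 * (Z i j * (1 : Matrix (Fin k) (Fin k) ℝ) i j) / b
            + ((1 : Matrix (Fin k) (Fin k) ℝ) i j) ^ 2 := by
      intro i j
      simp only [Matrix.sub_apply, Matrix.smul_apply, smul_eq_mul, Matrix.one_apply]
      by_cases h : i = j <;> simp [h] <;> field_simp <;> ring
    have e1 : ∑ i, ∑ j, (Z i j) ^ 2 / b ^ 2 = (∑ i, ∑ j, (Z i j) ^ 2) / b ^ 2 := by
      simp [Finset.sum_div]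
    have e2 : ∑ i, ∑ j, 2 * (Z i j * (1 : Matrix (Fin k) (Fin k) ℝ) i j) / b
        = 2 * Z.trace / b := by
      simp only [Matrix.one_apply, mul_ite, mul_one, mul_zero]
      rw [Matrix.trace, Finset.mul_sum, Finset.sum_div]
      apply Finset.sum_congr rfl
      intro i _
      rw [Finset.sum_eq_single i]
      · simp [Matrix.diag_apply]
      · intro j _ hj; simp [Ne.symm hj]
      · intro h; exact absurd (Finset.mem_univ i) h
    have e3 : ∑ i : Fin k, ∑ j : Fin k, ((1 : Matrix (Fin k) (Fin k) ℝ) i j) ^ 2 = (k : ℝ) := by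
      simp [Matrix.one_apply, ite_pow, Finset.sum_ite_eq]
    calc ∑ i, ∑ j, (((1 / b) • Z - 1) i j) ^ 2
        = ∑ i, ∑ j, ((Z i j) ^ 2 / b ^ 2
            - 2 * (Z i j * (1 : Matrix (Fin k) (Fin k) ℝ) i j) / b
            + ((1 : Matrix (Fin k) (Fin k) ℝ) i j) ^ 2) :=
          Finset.sum_congr rfl fun i _ => Finset.sum_congr rfl fun j _ => expand i j
      _ = (∑ i, ∑ j, (Z i j) ^ 2 / b ^ 2)
            - (∑ i, ∑ j, 2 * (Z i j * (1 : Matrix (Fin k) (Fin k) ℝ) i j) / b)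
            + (∑ i : Fin k, ∑ j : Fin k, ((1 : Matrix (Fin k) (Fin k) ℝ) i j) ^ 2) := by
          simp [Finset.sum_add_distrib, Finset.sum_sub_distrib]
      _ = (∑ i, ∑ j, (Z i j) ^ 2) / b ^ 2 - 2 * Z.trace / b + (k : ℝ) := by
          rw [e1, e2, e3]
  refine ⟨part1, ?_⟩
  constructor
  · rintro ⟨b, hb, hfb⟩
    have h1 := part1 b (ne_of_gt hb)
    have hnn : 0 ≤ frobNorm ((1 / b) • Z - 1) := Real.sqrt_nonneg _
    have hsq : frobNorm ((1 / b) • Z - 1) ^ 2 < 1 := by nlinarith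
    rw [h1] at hsq
    have hb2 : (0:ℝ) < b ^ 2 := by positivity
    have hbne : b ≠ 0 := ne_of_gt hb
    have key : (Z * Z).trace - 2 * Z.trace * b + ((k:ℝ) - 1) * b ^ 2 < 0 := by
      have e : (Z * Z).trace / b ^ 2 - 2 * Z.trace / b + (k:ℝ) - 1
          = ((Z * Z).trace - 2 * Z.trace * b + ((k:ℝ) - 1) * b ^ 2) / b ^ 2 := by
        field_simp; ring
      have h' : (Z * Z).trace / b ^ 2 - 2 * Z.trace / b + (k:ℝ) - 1 < 0 := by linarith
      rw [e] at h'
      rcases div_neg_iff.mp h' with ⟨_, h⟩ | ⟨h, _⟩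
      · linarith
      · exact h
    have key2 := mul_lt_mul_of_pos_left key htrZZ
    nlinarith [sq_nonneg (Z.trace * b - (Z * Z).trace), hb2, key2]
  · intro hgt
    set t := Z.trace
    set s := (Z * Z).trace
    refine ⟨s / t, div_pos htrZZ htrZ, ?_⟩
    have hb : s / t ≠ 0 := ne_of_gt (div_pos htrZZ htrZ)
    have h1 := part1 (s / t) hb
    rw [frobNorm, Real.sqrt_lt' one_pos]
    have heq : (∑ i, ∑ j, (((1 / (s / t)) • Z - 1) i j) ^ 2)
        = frobNorm ((1 / (s / t)) • Z - 1) ^ 2 := (frobNorm_sq _).symm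
    rw [heq, h1]
    have hts : s / (s/t)^2 - 2 * t / (s/t) + (k:ℝ) = (k:ℝ) - t^2/s := by
      field_simp
      ring
    rw [hts]
    have : t ^ 2 / s > (k:ℝ) - 1 := by
      rw [gt_iff_lt, lt_div_iff₀ htrZZ]
      nlinarith
    linarith
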